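/- With the notation above, for every complex z and B ∈ {N, D}: (I − z A_B⁻¹) G_z = G₀ ∩ (I − z A_B⁻¹) H¹. That is, a vector w ∈ G₀ lies in the image of G_z under I − z A_B⁻¹ if and only if w = (I − z A_B⁻¹)u for some u ∈ H¹, and conversely any u ∈ H¹ with (I − z A_B⁻¹)u ∈ G₀ belongs to G_z. -/

import Mathlib

noncomputable section

open scoped InnerProductSpace

local notation "⟪" x ", " y "⟫" => @inner ℂ _ _ x y

variable {H H1 : Type*} [NormedAddCommGroup H] [InnerProductSpace ℂ H] [CompleteSpace H]
  [NormedAddCommGroup H1] [InnerProductSpace ℂ H1] [CompleteSpace H1]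

/-- `MemA J H0 u f` says that `u` belongs to the domain `H¹_A` of the maximal
operator `A` (i.e. the functional `v ↦ a[u,v]` on `H0` is `H`-continuous) and
`A u = f`:  `a[u, v] = (f, v)` for all `v ∈ H0`. -/
def MemA (J : H1 →L[ℂ] H) (H0 : Submodule ℂ H1) (u : H1) (f : H) : Prop :=
  ∀ v ∈ H0, ⟪u, (v : H1)⟫ = ⟪f, J v⟫

/- For every `z ∈ ℂ` and `B ∈ {N, D}`:  `(I - z A_B⁻¹) G_z = G₀ ∩ (I - z A_B⁻¹) H¹`.
Equivalently: `u ∈ G_z` iff `(I - z A_B⁻¹) u ∈ G₀`, i.e. `MemA J H0 u (z • J u)`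
iff `MemA J H0 (u - z • T_B (J u)) 0`. -/
theorem stmt5
    (J : H1 →L[ℂ] H) (hJinj : Function.Injective J) (hJdense : DenseRange J)
    (H0 : Submodule ℂ H1) [CompleteSpace H0]
    (hH0dense : DenseRange (fun v : H0 => J v))
    (TN : H →L[ℂ] H1) (hTN : ∀ (u : H) (v : H1), ⟪TN u, v⟫ = ⟪u, J v⟫)
    (TD : H →L[ℂ] H1) (hTDmem : ∀ u : H, TD u ∈ H0)
    (hTD : ∀ (u : H), ∀ v ∈ H0, ⟪TD u, (v : H1)⟫ = ⟪u, J v⟫) :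
    ∀ (z : ℂ) (u : H1),
      (MemA J H0 u (z • J u) ↔ MemA J H0 (u - z • TN (J u)) 0) ∧
      (MemA J H0 u (z • J u) ↔ MemA J H0 (u - z • TD (J u)) 0) := by
  intro z u
  refine ⟨⟨fun h v hv => ?_, fun h v hv => ?_⟩, ⟨fun h v hv => ?_, fun h v hv => ?_⟩⟩
  · simp [inner_sub_left, inner_smul_left, hTN, h v hv]
  · have := h v hv
    simp only [inner_sub_left, inner_smul_left, hTN, inner_zero_left] at this
    simpa [inner_smul_left, sub_eq_zero, mul_comm] using this
  · simp [inner_sub_left, inner_smul_left, hTD (J u) v hv, h v hv]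
  · have := h v hv
    simp only [inner_sub_left, inner_smul_left, hTD (J u) v hv, inner_zero_left] at this
    simpa [inner_smul_left, sub_eq_zero, mul_comm] using this

end
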